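/- arXiv:1910.02819 — 5 statements merged into one kernel-verified Lean document; each statement's English description precedes it below -/
import Mathlib

section
/- Let G be a simple graph and let x ≠ y be two vertices of G. Suppose the edge set E(G) is partitioned into four pairwise edge-disjoint trails: P and Q, each from x to y, and R and S, each from y to x, all four 4-locally self-avoiding and of length at least 3. Suppose moreover that x and y occur in these trails only as endpoints (never as internal vertices), and that every vertex lying both on one of P, Q and on one of R, S is equal to x or y. Then the closed walk obtained by concatenating P (from x to y), R (from y to x), Q (from x to y), and S (from y to x) is a 4-locally self-avoiding Eulerian circuit of G. -/
open SimpleGraph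

namespace Quartic

variable {V : Type*}

/-- The vertex list `l` (the support of a trail `v_0 v_1 … v_m`) has a subcycle of
length `t` beginning at index `i`: the entries at positions `i` and `i + t` coincide
and the entries at positions `i, …, i + t - 1` are pairwise distinct.  Only short
lengths `1 ≤ t ≤ 4` are recorded. -/
def ShortSubcycleAt (l : List V) (i t : ℕ) : Prop :=
  1 ≤ t ∧ t ≤ 4 ∧ i + t < l.length ∧
    l[i]? = l[i + t]? ∧
    ∀ p q, i ≤ p → p < q → q < i + t → l[p]? ≠ l[q]?

/-- A trail (given as a walk) is 4-locally self-avoiding if it has no subcycle of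
length at most 4. -/
def TrailLSA4 {G : SimpleGraph V} {u v : V} (W : G.Walk u v) : Prop :=
  ¬ ∃ i t, ShortSubcycleAt W.support i t

/-- Cyclic analogue of `ShortSubcycleAt`, used for circuits: here `l` is the support
of a closed walk with the repeated final vertex removed, and indices are taken modulo
`l.length`, so that subcycles may wrap around the base point. -/
def CyclicShortSubcycleAt (l : List V) (i t : ℕ) : Prop :=
  1 ≤ t ∧ t ≤ 4 ∧ t ≤ l.length ∧
    l[i % l.length]? = l[(i + t) % l.length]? ∧
    ∀ p q, p < q → q < t →
      l[(i + p) % l.length]? ≠ l[(i + q) % l.length]?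

/-- A circuit (closed walk) is 4-locally self-avoiding if it has no cyclic subcycle of
length at most 4. -/
def CircuitLSA4 {G : SimpleGraph V} {u : V} (W : G.Walk u u) : Prop :=
  ¬ ∃ i t, CyclicShortSubcycleAt W.support.dropLast i t

/-- `W` is an Eulerian trail of its graph: a trail traversing every edge exactly once. -/
def IsEulerianTrail {G : SimpleGraph V} {u v : V} (W : G.Walk u v) : Prop :=
  W.IsTrail ∧ ∀ e, e ∈ G.edgeSet ↔ e ∈ W.edges

/-- `G` admits a 4-locally self-avoiding Eulerian circuit. -/
def HasLSA4EulerianCircuit (G : SimpleGraph V) : Prop :=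
  ∃ (u : V) (W : G.Walk u u), IsEulerianTrail W ∧ CircuitLSA4 W

/-- An `L`-path-chain from `u` to `w` in `G`: a sequence of `k` pairwise edge-disjoint
paths covering `E(G)`, the `i`-th of length `ℓ i`, where the first path starts at `u`,
the last path ends at `w`, and consecutive paths share their endpoint. -/
def PathChain (G : SimpleGraph V) (u w : V) {k : ℕ} (ℓ : Fin k → ℕ) : Prop :=
  ∃ (v : Fin (k + 1) → V) (P : ∀ i : Fin k, G.Walk (v i.castSucc) (v i.succ)),
    v 0 = u ∧ v (Fin.last k) = w ∧
    (∀ i, (P i).IsPath) ∧ (∀ i, (P i).length = ℓ i) ∧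
    (∀ i j, i ≠ j → ∀ e, e ∈ (P i).edges → e ∉ (P j).edges) ∧
    (∀ e, e ∈ G.edgeSet → ∃ i, e ∈ (P i).edges)

/-- The graph `F₆` on vertices `x = 0`, `a = 1`, `b = 2`, `c = 3`, `d = 4`, `y = 5`,
with the 11 edges `xa, xb, xc, ya, yc, yd, ab, bc, cd, ad, bd`. -/
def F6 : SimpleGraph (Fin 6) :=
  SimpleGraph.fromEdgeSet
    {s((0 : Fin 6), 1), s((0 : Fin 6), 2), s((0 : Fin 6), 3),
     s((5 : Fin 6), 1), s((5 : Fin 6), 3), s((5 : Fin 6), 4),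
     s((1 : Fin 6), 2), s((2 : Fin 6), 3), s((3 : Fin 6), 4),
     s((1 : Fin 6), 4), s((2 : Fin 6), 4)}

/-- The octahedron `K_{2,2,2}`, with parts `{0,3}`, `{1,4}`, `{2,5}`. -/
def Octahedron : SimpleGraph (Fin 6) :=
  SimpleGraph.fromRel (fun i j => (i : ℕ) % 3 ≠ (j : ℕ) % 3)

/-- The `n`-antiprism, on vertices `u i = (0, i)` and `w i = (1, i)` for `i : ZMod n`,
with edges `u i — u (i+1)`, `w i — w (i+1)`, `u i — w i` and `u (i+1) — w i`. -/
def Antiprism (n : ℕ) : SimpleGraph (Fin 2 × ZMod n) :=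
  SimpleGraph.fromRel (fun p q =>
    (p.1 = q.1 ∧ q.2 = p.2 + 1) ∨
    (p.1 = 0 ∧ q.1 = 1 ∧ (q.2 = p.2 ∨ p.2 = q.2 + 1)))

/-- The graph `G₇` on vertices `x = 0`, `y = 1`, `a = 2`, `b = 3`, `c = 4`, `d = 5`,
`e = 6`, with the 13 edges `xa, xd, xy, yb, ye, ab, ac, ad, bc, be, cd, ce, de`. -/
def G7 : SimpleGraph (Fin 7) :=
  SimpleGraph.fromEdgeSet
    {s((0 : Fin 7), 2), s((0 : Fin 7), 5), s((0 : Fin 7), 1),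
     s((1 : Fin 7), 3), s((1 : Fin 7), 6),
     s((2 : Fin 7), 3), s((2 : Fin 7), 4), s((2 : Fin 7), 5),
     s((3 : Fin 7), 4), s((3 : Fin 7), 6),
     s((4 : Fin 7), 5), s((4 : Fin 7), 6), s((5 : Fin 7), 6)}


section Helpers

variable {G : SimpleGraph V}


variable {G : SimpleGraph V}

lemma support_get?_length {u v : V} (p : G.Walk u v) :
    p.support[p.length]? = some v := by
  induction p with
  | nil => rfl
  | cons h p ih => simpa [Walk.support_cons] using ih

lemma support_dropLast_append {u v w : V} (p : G.Walk u v) (q : G.Walk v w) :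
    (p.append q).support = p.support.dropLast ++ q.support := by
  induction p with
  | nil => simp
  | cons h p ih =>
    rw [Walk.cons_append, Walk.support_cons, ih, Walk.support_cons,
      List.dropLast_cons_of_ne_nil p.support_ne_nil]
    rfl

lemma length_support_dropLast {u v : V} (p : G.Walk u v) :
    p.support.dropLast.length = p.length := by
  simp [Walk.length_support]

lemma get?_support_dropLast {u v : V} (p : G.Walk u v) {k : ℕ} (hk : k < p.length) :
    p.support.dropLast[k]? = p.support[k]? := by
  rw [List.dropLast_eq_take, List.getElem?_take_of_lt]
  rw [Walk.length_support]; omega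

lemma interior_mem {x y v : V} (A : G.Walk x y) {k : ℕ} (h1 : 0 < k)
    (h2 : k < A.length) (h : A.support[k]? = some v) :
    v ∈ A.support.tail.dropLast := by
  obtain ⟨k, rfl⟩ : ∃ m, k = m + 1 := ⟨k - 1, by omega⟩
  have htail : A.support.tail[k]? = some v := by
    rw [Walk.support_eq_cons] at h
    exact h
  have hlen : A.support.tail.length = A.length := by
    rw [List.length_tail, Walk.length_support]; omega
  have : A.support.tail.dropLast[k]? = some v := by
    rw [List.dropLast_eq_take, List.getElem?_take_of_lt (by omega)]
    exact htail
  exact List.mem_of_getElem? this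

lemma not_end_before {x y : V} (A : G.Walk x y) (hxy : x ≠ y)
    (hy : y ∉ A.support.tail.dropLast) {k : ℕ} (hk : k < A.length) :
    A.support[k]? ≠ some y := by
  intro h
  rcases Nat.eq_zero_or_pos k with rfl | h0
  · rw [Walk.support_eq_cons] at h
    exact hxy (by simpa using h)
  · exact hy (interior_mem A h0 hk h)

lemma not_start_after {x y : V} (A : G.Walk x y) (hxy : x ≠ y)
    (hx : x ∉ A.support.tail.dropLast) {k : ℕ} (h0 : 0 < k) (hk : k ≤ A.length) :
    A.support[k]? ≠ some x := by
  intro h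
  rcases eq_or_lt_of_le hk with rfl | hlt
  · rw [support_get?_length] at h
    have : y = x := by simpa using h
    exact hxy this.symm
  · exact hx (interior_mem A h0 hlt h)

lemma cyclic_mod {l : List V} {i t : ℕ} (h : CyclicShortSubcycleAt l i t) :
    CyclicShortSubcycleAt l (i % l.length) t := by
  obtain ⟨h1, h2, h3, h4, h5⟩ := h
  refine ⟨h1, h2, h3, ?_, ?_⟩
  · rwa [Nat.mod_mod_of_dvd i dvd_rfl, Nat.mod_add_mod]
  · intro p q hpq hq
    rw [Nat.mod_add_mod, Nat.mod_add_mod]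
    exact h5 p q hpq hq

lemma cyclic_rotate {l : List V} {n i t : ℕ} (hn : n ≤ l.length)
    (h : CyclicShortSubcycleAt l (i + n) t) :
    CyclicShortSubcycleAt (l.rotate n) i t := by
  have hlen : (l.rotate n).length = l.length := List.length_rotate l n
  have hl0 : 0 < l.length := by
    obtain ⟨h1, h2, h3, -, -⟩ := h; omega
  have key : ∀ m, (l.rotate n)[m % l.length]? = l[(m + n) % l.length]? := by
    intro m
    have hm : m % l.length < (l.rotate n).length := by
      rw [hlen]; exact Nat.mod_lt _ hl0
    rw [List.getElem?_eq_getElem hm, List.getElem_rotate,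
      List.getElem?_eq_getElem (show (m + n) % l.length < l.length from Nat.mod_lt _ hl0)]
    congr 1
    simp only [Nat.mod_add_mod]
  obtain ⟨h1, h2, h3, h4, h5⟩ := h
  refine ⟨h1, h2, by rw [hlen]; exact h3, ?_, ?_⟩
  · rw [hlen, key i, key (i + t), show i + t + n = i + n + t from by omega]
    exact h4
  · intro p q hpq hq
    rw [hlen, key (i + p), key (i + q), show i + p + n = i + n + p from by omega,
      show i + q + n = i + n + q from by omega]
    exact h5 p q hpq hq


lemma core {x y : V} (hxy : x ≠ y)
    (A : G.Walk x y) (B : G.Walk y x) (C : G.Walk x y) (D : G.Walk y x)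
    (hAl : TrailLSA4 A)
    (ha : 3 ≤ A.length) (hb : 3 ≤ B.length) (hc : 3 ≤ C.length) (hd : 3 ≤ D.length)
    (hxA : x ∉ A.support.tail.dropLast) (hyA : y ∉ A.support.tail.dropLast)
    (hxB : x ∉ B.support.tail.dropLast)
    (hmeet : ∀ v, v ∈ A.support → v ∈ B.support → v = x ∨ v = y)
    {i t : ℕ} (hi : i < A.length) :
    ¬ CyclicShortSubcycleAt
      (A.support.dropLast ++ (B.support.dropLast ++ (C.support.dropLast ++ D.support.dropLast)))
      i t := by
  intro hcyc
  set L := A.support.dropLast ++ (B.support.dropLast ++ (C.support.dropLast ++ D.support.dropLast))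
    with hL
  obtain ⟨ht1, ht4, -, heq, hdist⟩ := hcyc
  have hNL : L.length = A.length + (B.length + (C.length + D.length)) := by
    simp [hL, length_support_dropLast]
  have hgetA : ∀ k, k < A.length → L[k]? = A.support[k]? := by
    intro k hk
    rw [hL, List.getElem?_append_left (by rw [length_support_dropLast]; exact hk),
      get?_support_dropLast A hk]
  have hgetB : ∀ k, A.length ≤ k → k - A.length < B.length →
      L[k]? = B.support[k - A.length]? := by
    intro k hk1 hk2
    rw [hL, List.getElem?_append_right (by rw [length_support_dropLast]; exact hk1),
      length_support_dropLast,
      List.getElem?_append_left (by rw [length_support_dropLast]; exact hk2),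
      get?_support_dropLast B hk2]
  have hgetC : L[A.length + B.length]? = some x := by
    rw [hL, List.getElem?_append_right (by rw [length_support_dropLast]; omega),
      length_support_dropLast,
      List.getElem?_append_right (by rw [length_support_dropLast]; omega),
      length_support_dropLast,
      List.getElem?_append_left (by rw [length_support_dropLast]; omega),
      get?_support_dropLast C (by omega)]
    rw [show A.length + B.length - A.length - B.length = 0 from by omega,
      Walk.support_eq_cons]
    rfl
  have hiN : i < L.length := by omega
  have hitN : i + t < L.length := by omega
  rw [Nat.mod_eq_of_lt hiN, Nat.mod_eq_of_lt hitN] at heq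
  rcases lt_or_ge (i + t) A.length with hcase | hcase
  · -- entirely within A
    apply hAl
    refine ⟨i, t, ht1, ht4, by rw [Walk.length_support]; omega, ?_, ?_⟩
    · rw [← hgetA i hi, ← hgetA (i + t) hcase]; exact heq
    · intro p q hp hpq hq hne
      have hd2 := hdist (p - i) (q - i) (by omega) (by omega)
      rw [show i + (p - i) = p from by omega, show i + (q - i) = q from by omega,
        Nat.mod_eq_of_lt (by omega), Nat.mod_eq_of_lt (by omega),
        hgetA p (by omega), hgetA q (by omega)] at hd2
      exact hd2 hne
  · rcases lt_or_ge (i + t) (A.length + B.length) with hcase2 | hcase2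
    · -- second endpoint inside B
      obtain ⟨v, hAv⟩ : ∃ v, A.support[i]? = some v := by
        refine ⟨_, List.getElem?_eq_getElem ?_⟩
        rw [Walk.length_support]; omega
      have hBv : B.support[i + t - A.length]? = some v := by
        rw [← hgetB _ (by omega) (by omega), ← heq, hgetA i hi]; exact hAv
      rcases hmeet v (List.mem_of_getElem? hAv) (List.mem_of_getElem? hBv) with rfl | rfl
      · rcases Nat.eq_zero_or_pos i with rfl | h0
        · exact not_end_before B hxy.symm hxB (by omega : 0 + t - A.length < B.length) hBv
        · exact not_start_after A hxy hxA h0 (le_of_lt hi) hAv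
      · exact not_end_before A hxy hyA hi hAv
    · -- second endpoint is the start of C
      have he : i + t = A.length + B.length := by omega
      have h0 : 0 < i := by omega
      have hx2 : A.support[i]? = some x := by
        rw [← hgetA i hi, heq, he]; exact hgetC
      exact not_start_after A hxy hxA h0 (le_of_lt hi) hx2

end Helpers

/-- stitching four trails into a 4-locally self-avoiding Eulerian circuit.
`E(G)` is partitioned into four pairwise edge-disjoint 4-locally self-avoiding trails
`P, Q : x → y` and `R, S : y → x` of length ≥ 3, in which `x` and `y` occur only as
endpoints, and any vertex on both one of `P, Q` and one of `R, S` equals `x` or `y`.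
Then the concatenation `P R Q S` is a 4-locally self-avoiding Eulerian circuit of `G`. -/
theorem stitch_four_trails {V : Type} [Fintype V]
    (G : SimpleGraph V) (x y : V) (hxy : x ≠ y)
    (P Q : G.Walk x y) (R S : G.Walk y x)
    (hPt : P.IsTrail) (hQt : Q.IsTrail) (hRt : R.IsTrail) (hSt : S.IsTrail)
    (hPl : TrailLSA4 P) (hQl : TrailLSA4 Q) (hRl : TrailLSA4 R) (hSl : TrailLSA4 S)
    (hPlen : 3 ≤ P.length) (hQlen : 3 ≤ Q.length)
    (hRlen : 3 ≤ R.length) (hSlen : 3 ≤ S.length)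
    (hPQ : ∀ e, e ∈ P.edges → e ∉ Q.edges) (hPR : ∀ e, e ∈ P.edges → e ∉ R.edges)
    (hPS : ∀ e, e ∈ P.edges → e ∉ S.edges) (hQR : ∀ e, e ∈ Q.edges → e ∉ R.edges)
    (hQS : ∀ e, e ∈ Q.edges → e ∉ S.edges) (hRS : ∀ e, e ∈ R.edges → e ∉ S.edges)
    (hcover : ∀ e, e ∈ G.edgeSet →
      e ∈ P.edges ∨ e ∈ Q.edges ∨ e ∈ R.edges ∨ e ∈ S.edges)
    (hxP : x ∉ P.support.tail.dropLast) (hyP : y ∉ P.support.tail.dropLast)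
    (hxQ : x ∉ Q.support.tail.dropLast) (hyQ : y ∉ Q.support.tail.dropLast)
    (hxR : x ∉ R.support.tail.dropLast) (hyR : y ∉ R.support.tail.dropLast)
    (hxS : x ∉ S.support.tail.dropLast) (hyS : y ∉ S.support.tail.dropLast)
    (hmeet : ∀ v : V, (v ∈ P.support ∨ v ∈ Q.support) →
      (v ∈ R.support ∨ v ∈ S.support) → v = x ∨ v = y) :
    IsEulerianTrail (P.append (R.append (Q.append S))) ∧
      CircuitLSA4 (P.append (R.append (Q.append S))) := by
  constructor
  · constructor
    · rw [Walk.isTrail_def]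
      simp only [Walk.edges_append, List.nodup_append, List.mem_append]
      refine ⟨hPt.edges_nodup, ⟨hRt.edges_nodup, ⟨hQt.edges_nodup, hSt.edges_nodup, ?_⟩, ?_⟩, ?_⟩
      · rintro a ha b hb rfl; exact hQS a ha hb
      · rintro a ha b hb rfl
        rcases hb with hb | hb
        · exact hQR a hb ha
        · exact hRS a ha hb
      · rintro a ha b hb rfl
        rcases hb with hb | hb | hb
        · exact hPR a ha hb
        · exact hPQ a ha hb
        · exact hPS a ha hb
    · intro e
      constructor
      · intro he
        simp only [Walk.edges_append, List.mem_append]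
        rcases hcover e he with h | h | h | h <;> tauto
      · exact fun he => Walk.edges_subset_edgeSet _ he
  · rintro ⟨i, t, hcyc⟩
    have hsupp : (P.append (R.append (Q.append S))).support.dropLast
        = P.support.dropLast ++ (R.support.dropLast ++ (Q.support.dropLast ++ S.support.dropLast)) := by
      rw [support_dropLast_append, support_dropLast_append, support_dropLast_append,
        show P.support.dropLast ++ (R.support.dropLast ++ (Q.support.dropLast ++ S.support))
          = (P.support.dropLast ++ R.support.dropLast ++ Q.support.dropLast) ++ S.support
          from by simp,
        List.dropLast_append_of_ne_nil S.support_ne_nil]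
      simp
    rw [hsupp] at hcyc
    set L := P.support.dropLast ++ (R.support.dropLast ++ (Q.support.dropLast ++ S.support.dropLast))
      with hL
    have hNL : L.length = P.length + (R.length + (Q.length + S.length)) := by
      simp [hL, length_support_dropLast]
    replace hcyc := cyclic_mod hcyc
    have hi0 : i % L.length < L.length := Nat.mod_lt _ (by omega)
    set i0 := i % L.length with hi0def
    rcases lt_or_ge i0 P.length with h1 | h1
    · exact core hxy P R Q S hPl hPlen hRlen hQlen hSlen hxP hyP hxR
        (fun v hv1 hv2 => hmeet v (Or.inl hv1) (Or.inl hv2)) h1 hcyc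
    rcases lt_or_ge i0 (P.length + R.length) with h2 | h2
    · have hrot : CyclicShortSubcycleAt (L.rotate P.length) (i0 - P.length) t := by
        apply cyclic_rotate (by omega)
        rw [show i0 - P.length + P.length = i0 from by omega]
        exact hcyc
      have hLrot : L.rotate P.length
          = R.support.dropLast ++ (Q.support.dropLast ++ (S.support.dropLast ++ P.support.dropLast)) := by
        rw [hL, show P.length = P.support.dropLast.length from (length_support_dropLast P).symm,
          List.rotate_eq_drop_append_take (by simp), List.drop_left, List.take_left]
        simp
      rw [hLrot] at hrot
      exact core hxy.symm R Q S P hRl hRlen hQlen hSlen hPlen hyR hxR hyQ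
        (fun v hv1 hv2 => (hmeet v (Or.inr hv2) (Or.inl hv1)).symm) (by omega) hrot
    rcases lt_or_ge i0 (P.length + R.length + Q.length) with h3 | h3
    · have hrot : CyclicShortSubcycleAt (L.rotate (P.length + R.length))
          (i0 - (P.length + R.length)) t := by
        apply cyclic_rotate (by omega)
        rw [show i0 - (P.length + R.length) + (P.length + R.length) = i0 from by omega]
        exact hcyc
      have hLrot : L.rotate (P.length + R.length)
          = Q.support.dropLast ++ (S.support.dropLast ++ (P.support.dropLast ++ R.support.dropLast)) := by
        have hassoc : L = (P.support.dropLast ++ R.support.dropLast)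
            ++ (Q.support.dropLast ++ S.support.dropLast) := by
          simp [hL]
        rw [hassoc, show P.length + R.length = (P.support.dropLast ++ R.support.dropLast).length
            from by simp [length_support_dropLast],
          List.rotate_eq_drop_append_take (by simp), List.drop_left, List.take_left]
        simp
      rw [hLrot] at hrot
      exact core hxy Q S P R hQl hQlen hSlen hPlen hRlen hxQ hyQ hxS
        (fun v hv1 hv2 => hmeet v (Or.inr hv1) (Or.inr hv2)) (by omega) hrot
    · have hrot : CyclicShortSubcycleAt (L.rotate (P.length + R.length + Q.length))
          (i0 - (P.length + R.length + Q.length)) t := by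
        apply cyclic_rotate (by omega)
        rw [show i0 - (P.length + R.length + Q.length) + (P.length + R.length + Q.length) = i0
          from by omega]
        exact hcyc
      have hLrot : L.rotate (P.length + R.length + Q.length)
          = S.support.dropLast ++ (P.support.dropLast ++ (R.support.dropLast ++ Q.support.dropLast)) := by
        have hassoc : L = (P.support.dropLast ++ R.support.dropLast ++ Q.support.dropLast)
            ++ S.support.dropLast := by
          simp [hL]
        rw [hassoc, show P.length + R.length + Q.length
            = (P.support.dropLast ++ R.support.dropLast ++ Q.support.dropLast).length
            from by simp [length_support_dropLast]; omega,
          List.rotate_eq_drop_append_take (by simp), List.drop_left, List.take_left]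
        simp
      rw [hLrot] at hrot
      exact core hxy.symm S P R Q hSl hSlen hPlen hRlen hQlen hyS hxS hyP
        (fun v hv1 hv2 => (hmeet v (Or.inl hv2) (Or.inr hv1)).symm) (by omega) hrot

end Quartic
end

section
/- Let L = (ℓ_1, …, ℓ_k) be any sequence with each ℓ_i ∈ {1, 2, 3, 4} and ℓ_1 + ⋯ + ℓ_k = 11. Then F_6 admits an L-path-chain from x to y. -/
open SimpleGraph

namespace Quartic

variable {V : Type*}

lemma F6_adj_iff (u v : Fin 6) : F6.Adj u v ↔
    ((s(u,v) = s((0 : Fin 6), 1) ∨ s(u,v) = s((0 : Fin 6), 2) ∨ s(u,v) = s((0 : Fin 6), 3) ∨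
      s(u,v) = s((5 : Fin 6), 1) ∨ s(u,v) = s((5 : Fin 6), 3) ∨ s(u,v) = s((5 : Fin 6), 4) ∨
      s(u,v) = s((1 : Fin 6), 2) ∨ s(u,v) = s((2 : Fin 6), 3) ∨ s(u,v) = s((3 : Fin 6), 4) ∨
      s(u,v) = s((1 : Fin 6), 4) ∨ s(u,v) = s((2 : Fin 6), 4)) ∧ u ≠ v) := by
  simp [F6, SimpleGraph.fromEdgeSet_adj, Set.mem_insert_iff, Set.mem_singleton_iff]

instance : DecidableRel F6.Adj := fun u v => decidable_of_iff _ (F6_adj_iff u v).symm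

def TA : ℕ → Fin 6 := fun n => [0,1,4,2,3,4,5,1,2,0,3,5].getD n 0
def TB : ℕ → Fin 6 := fun n => [0,1,2,3,4,5,1,4,2,0,3,5].getD n 0
def TC : ℕ → Fin 6 := fun n => [0,1,4,2,3,5,1,2,0,3,4,5].getD n 0

def seg (T : ℕ → Fin 6) (hadj : ∀ j, j < 11 → F6.Adj (T j) (T (j+1))) :
    (t s : ℕ) → s + t ≤ 11 → F6.Walk (T s) (T (s + t))
  | 0, s, _ => SimpleGraph.Walk.nil
  | t+1, s, h =>
      (SimpleGraph.Walk.cons (hadj s (by omega)) (seg T hadj t (s+1) (by omega))).copy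
        rfl (congrArg T (by omega))

lemma range_map_shift (f : ℕ → Fin 6) (t s : ℕ) :
    (List.range (t+1+1)).map (fun j => f (s+j))
      = f s :: (List.range (t+1)).map (fun j => f (s+1+j)) := by
  rw [List.range_succ_eq_map, List.map_cons, List.map_map]
  congr 1
  apply List.map_congr_left
  intro j _
  simp only [Function.comp_apply]
  rw [show s + 1 + j = s + j.succ from by omega]

lemma range_map_shift' (f : ℕ → Sym2 (Fin 6)) (t s : ℕ) :
    (List.range (t+1+1)).map (fun j => f (s+j))
      = f s :: (List.range (t+1)).map (fun j => f (s+1+j)) := by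
  rw [List.range_succ_eq_map, List.map_cons, List.map_map]
  congr 1
  apply List.map_congr_left
  intro j _
  simp only [Function.comp_apply]
  rw [show s + 1 + j = s + j.succ from by omega]

lemma seg_support (T : ℕ → Fin 6) (hadj : ∀ j, j < 11 → F6.Adj (T j) (T (j+1))) :
    ∀ (t s : ℕ) (h : s + t ≤ 11),
      (seg T hadj t s h).support = (List.range (t+1)).map (fun j => T (s+j)) := by
  intro t
  induction t with
  | zero => intro s h; rfl
  | succ t ih =>
      intro s h
      rw [seg, SimpleGraph.Walk.support_copy, SimpleGraph.Walk.support_cons, ih,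
        range_map_shift]

lemma seg_edges (T : ℕ → Fin 6) (hadj : ∀ j, j < 11 → F6.Adj (T j) (T (j+1))) :
    ∀ (t s : ℕ) (h : s + t ≤ 11),
      (seg T hadj t s h).edges = (List.range t).map (fun j => s(T (s+j), T (s+j+1))) := by
  intro t
  induction t with
  | zero => intro s h; rfl
  | succ t ih =>
      intro s h
      rw [seg, SimpleGraph.Walk.edges_copy, SimpleGraph.Walk.edges_cons, ih]
      cases t with
      | zero => rfl
      | succ t =>
          rw [show (fun j => s(T (s+j), T (s+j+1))) = (fun j => (fun n => s(T n, T (n+1))) (s+j)) from rfl,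
            range_map_shift' (fun n => s(T n, T (n+1)))]

lemma seg_length (T : ℕ → Fin 6) (hadj : ∀ j, j < 11 → F6.Adj (T j) (T (j+1)))
    (t s : ℕ) (h : s + t ≤ 11) : (seg T hadj t s h).length = t := by
  rw [← SimpleGraph.Walk.length_edges, seg_edges]; simp
section
variable {k : ℕ}

def SS (k : ℕ) (ℓ : Fin k → ℕ) (n : ℕ) : ℕ :=
  ∑ j ∈ Finset.range n, (if h : j < k then ℓ ⟨j, h⟩ else 0)

lemma SS_zero (ℓ : Fin k → ℕ) : SS k ℓ 0 = 0 := by simp [SS]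

lemma SS_succ (ℓ : Fin k → ℕ) (n : ℕ) :
    SS k ℓ (n+1) = SS k ℓ n + (if h : n < k then ℓ ⟨n, h⟩ else 0) := by
  simp [SS, Finset.sum_range_succ]

lemma SS_step (ℓ : Fin k → ℕ) (i : Fin k) :
    SS k ℓ (i.val + 1) = SS k ℓ i.val + ℓ i := by
  rw [SS_succ, dif_pos i.isLt]

lemma SS_mono (ℓ : Fin k → ℕ) {m n : ℕ} (h : m ≤ n) : SS k ℓ m ≤ SS k ℓ n :=
  Finset.sum_le_sum_of_subset (Finset.range_subset_range.2 h)

lemma SS_top (ℓ : Fin k → ℕ) (hsum : ∑ i, ℓ i = 11) : SS k ℓ k = 11 := by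
  rw [SS, ← Fin.sum_univ_eq_sum_range (fun j => if h : j < k then ℓ ⟨j, h⟩ else 0) k, ← hsum]
  apply Finset.sum_congr rfl
  intro i _
  rw [dif_pos i.isLt]

lemma SS_lt (ℓ : Fin k → ℕ) (hb : ∀ i, 1 ≤ ℓ i ∧ ℓ i ≤ 4) {m n : ℕ}
    (hm : m < n) (hn : n ≤ k) : SS k ℓ m < SS k ℓ n := by
  have h1 : SS k ℓ (m+1) ≤ SS k ℓ n := SS_mono ℓ hm
  have h2 := SS_step ℓ ⟨m, lt_of_lt_of_le hm hn⟩
  have h3 := (hb ⟨m, lt_of_lt_of_le hm hn⟩).1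
  simp only [Fin.val_mk] at h2 h3
  omega

lemma SS_interval (ℓ : Fin k → ℕ) :
    ∀ n j, j < SS k ℓ n → ∃ i, i < n ∧ SS k ℓ i ≤ j ∧ j < SS k ℓ (i+1) := by
  intro n
  induction n with
  | zero => intro j hj; rw [SS_zero] at hj; omega
  | succ n ih =>
      intro j hj
      by_cases h : j < SS k ℓ n
      · obtain ⟨i, h1, h2, h3⟩ := ih j h
        exact ⟨i, by omega, h2, h3⟩
      · exact ⟨n, by omega, by omega, hj⟩
end

lemma key (k : ℕ) (ℓ : Fin k → ℕ) (hb : ∀ i, 1 ≤ ℓ i ∧ ℓ i ≤ 4) (hsum : ∑ i, ℓ i = 11)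
    (T : ℕ → Fin 6) (b1 b2 : ℕ)
    (hT0 : T 0 = 0) (hT11 : T 11 = 5)
    (hadj : ∀ j, j < 11 → F6.Adj (T j) (T (j+1)))
    (hinj : ∀ q, q < 12 → ∀ p, p < q → q ≤ p + 4 → T p = T q → p = b1 ∧ q = b2)
    (hEinj : ∀ p, p < 11 → ∀ q, q < 11 → s(T p, T (p+1)) = s(T q, T (q+1)) → p = q)
    (hcov : ∀ u v : Fin 6, F6.Adj u v → ∃ j, j < 11 ∧ s(u, v) = s(T j, T (j+1)))
    (hcut : ∃ m, b1 < SS k ℓ m ∧ SS k ℓ m < b2) :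
    PathChain F6 (0 : Fin 6) (5 : Fin 6) ℓ := by
  have hS11 : SS k ℓ k = 11 := SS_top ℓ hsum
  have hbd : ∀ i : Fin k, SS k ℓ i.val + ℓ i ≤ 11 := by
    intro i
    rw [← SS_step]
    calc SS k ℓ (i.val+1) ≤ SS k ℓ k := SS_mono ℓ i.isLt
    _ = 11 := hS11
  refine ⟨fun i => T (SS k ℓ i.val),
    fun i => (seg T hadj (ℓ i) (SS k ℓ i.val) (hbd i)).copy rfl (congrArg T (SS_step ℓ i).symm),
    ?_, ?_, ?_, ?_, ?_, ?_⟩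
  · show T (SS k ℓ 0) = 0
    rw [SS_zero, hT0]
  · show T (SS k ℓ k) = 5
    rw [hS11, hT11]
  · intro i
    rw [SimpleGraph.Walk.isPath_copy]
    apply SimpleGraph.Walk.IsPath.mk'
    rw [seg_support]
    apply List.Nodup.map_on _ List.nodup_range
    intro x hx y hy hxy
    rw [List.mem_range] at hx hy
    obtain ⟨m, hm1, hm2⟩ := hcut
    have hli := hb i
    have hstepi := SS_step ℓ i
    have keyne : ∀ a b : ℕ, a < b → b < ℓ i + 1 → T (SS k ℓ i.val + a) ≠ T (SS k ℓ i.val + b) := by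
      intro a b hab hb' heq
      have hq12 : SS k ℓ i.val + b < 12 := by have := hbd i; omega
      have hpq := hinj (SS k ℓ i.val + b) hq12 (SS k ℓ i.val + a) (by omega) (by omega) heq
      rcases le_or_gt m i.val with h|h
      · have := SS_mono ℓ h (k := k)
        omega
      · have := SS_mono ℓ (show i.val + 1 ≤ m from h) (k := k)
        omega
    rcases Nat.lt_trichotomy x y with h|h|h
    · exact absurd hxy (keyne x y h hy)
    · exact h
    · exact absurd hxy.symm (keyne y x h hx)
  · intro i
    rw [SimpleGraph.Walk.length_copy, seg_length]
  · intro i j hij e hei hej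
    rw [SimpleGraph.Walk.edges_copy, seg_edges, List.mem_map] at hei hej
    obtain ⟨a, ha, hea⟩ := hei
    obtain ⟨b, hbb, heb⟩ := hej
    rw [List.mem_range] at ha hbb
    have h1 : SS k ℓ i.val + a < 11 := by have := hbd i; omega
    have h2 : SS k ℓ j.val + b < 11 := by have := hbd j; omega
    have heq := hEinj _ h1 _ h2 (hea.trans heb.symm)
    have hne : i.val ≠ j.val := fun h => hij (Fin.ext h)
    rcases Nat.lt_or_ge i.val j.val with h|h
    · have e1 := SS_step ℓ i
      have e2 := SS_mono ℓ (show i.val + 1 ≤ j.val from h) (k := k)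
      omega
    · have e1 := SS_step ℓ j
      have e2 := SS_mono ℓ (show j.val + 1 ≤ i.val from by omega) (k := k)
      omega
  · intro e he
    induction e using Sym2.ind with
    | _ u v =>
      rw [SimpleGraph.mem_edgeSet] at he
      obtain ⟨j, hj, hj2⟩ := hcov u v he
      obtain ⟨i, hik, h1, h2⟩ := SS_interval ℓ k j (by omega)
      have hstep := SS_step ℓ ⟨i, hik⟩
      simp only [Fin.val_mk] at hstep
      refine ⟨⟨i, hik⟩, ?_⟩
      rw [SimpleGraph.Walk.edges_copy, seg_edges, List.mem_map]
      refine ⟨j - SS k ℓ i, ?_, ?_⟩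
      · rw [List.mem_range]
        omega
      · simp only [Fin.val_mk]
        rw [show SS k ℓ i + (j - SS k ℓ i) = j from by omega]
        exact hj2.symm

/-- for every sequence `L = (ℓ₁, …, ℓ_k)` with each `ℓᵢ ∈ {1, 2, 3, 4}`
and `ℓ₁ + ⋯ + ℓ_k = 11`, the graph `F₆` admits an `L`-path-chain from `x` (= vertex 0)
to `y` (= vertex 5). -/
theorem F6_pathChain (k : ℕ) (ℓ : Fin k → ℕ)
    (hbound : ∀ i, 1 ≤ ℓ i ∧ ℓ i ≤ 4) (hsum : ∑ i, ℓ i = 11) :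
    PathChain F6 (0 : Fin 6) (5 : Fin 6) ℓ := by
  have hS11 : SS k ℓ k = 11 := SS_top ℓ hsum
  obtain ⟨i, hik, h1, h2⟩ := SS_interval ℓ k 2 (by omega)
  have hstep := SS_step ℓ ⟨i, hik⟩
  have hbi := hbound ⟨i, hik⟩
  simp only [Fin.val_mk] at hstep
  have hcase : SS k ℓ (i+1) = 3 ∨ SS k ℓ (i+1) = 4 ∨ SS k ℓ (i+1) = 5 ∨ SS k ℓ (i+1) = 6 := by
    omega
  rcases hcase with h|h|h|h
  · exact key k ℓ hbound hsum TA 2 5 rfl rfl (by decide) (by decide) (by decide) (by decide)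
      ⟨i+1, by omega, by omega⟩
  · exact key k ℓ hbound hsum TA 2 5 rfl rfl (by decide) (by decide) (by decide) (by decide)
      ⟨i+1, by omega, by omega⟩
  · exact key k ℓ hbound hsum TB 4 7 rfl rfl (by decide) (by decide) (by decide) (by decide)
      ⟨i+1, by omega, by omega⟩
  · exact key k ℓ hbound hsum TC 3 7 rfl rfl (by decide) (by decide) (by decide) (by decide)
      ⟨i+1, by omega, by omega⟩

end Quartic
end

section
/- Let G be a simple graph with at least one edge that admits a 4-locally self-avoiding Eulerian circuit, let v be a vertex of G of positive degree, and let L = (ℓ_1, …, ℓ_k) be a sequence with each ℓ_i ∈ {1, 2, 3, 4} and ℓ_1 + ⋯ + ℓ_k = |E(G)|. Then G has a P_{(L,v)}-decomposition. -/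
open SimpleGraph

namespace Quartic

variable {V : Type*}

variable {V : Type*} {G : SimpleGraph V}

/-- Take the first `n` edges of a walk. -/
def wtake {u v : V} : (W : G.Walk u v) → (n : ℕ) → G.Walk u (W.getVert n)
  | .nil, _ => .nil
  | .cons _ _, 0 => .nil
  | .cons h q, n + 1 => .cons h (wtake q n)

/-- Drop the first `n` edges of a walk. -/
def wdrop {u v : V} : (W : G.Walk u v) → (n : ℕ) → G.Walk (W.getVert n) v
  | .nil, _ => .nil
  | .cons h q, 0 => .cons h q
  | .cons _ q, n + 1 => wdrop q n

lemma wtake_edges {u v : V} (W : G.Walk u v) : ∀ n, (wtake W n).edges = W.edges.take n := by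
  induction W with
  | nil => intro n; simp [wtake]
  | cons h q ih =>
    intro n
    cases n with
    | zero => simp [wtake]; rfl
    | succ n => simp [wtake, ih n]

lemma wtake_support {u v : V} (W : G.Walk u v) :
    ∀ n, (wtake W n).support = W.support.take (n + 1) := by
  induction W with
  | nil => intro n; simp [wtake]
  | cons h q ih =>
    intro n
    cases n with
    | zero => simp [wtake]; rfl
    | succ n => simp [wtake, ih n]

lemma wtake_length {u v : V} (W : G.Walk u v) :
    ∀ n, (wtake W n).length = min n W.length := by
  induction W with
  | nil => intro n; simp [wtake]
  | cons h q ih =>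
    intro n
    cases n with
    | zero => simp [wtake]; rfl
    | succ n => simp [wtake, ih n, Nat.succ_min_succ]

lemma wdrop_edges {u v : V} (W : G.Walk u v) : ∀ n, (wdrop W n).edges = W.edges.drop n := by
  induction W with
  | nil => intro n; simp [wdrop]
  | cons h q ih =>
    intro n
    cases n with
    | zero => simp [wdrop]; rfl
    | succ n => simp [wdrop, ih n]

lemma wdrop_support {u v : V} (W : G.Walk u v) :
    ∀ n, n ≤ W.length → (wdrop W n).support = W.support.drop n := by
  induction W with
  | nil => intro n hn; obtain rfl : n = 0 := Nat.le_zero.mp hn; simp [wdrop]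
  | cons h q ih =>
    intro n hn
    cases n with
    | zero => simp [wdrop]; rfl
    | succ n => simpa [wdrop] using ih n (by simpa using hn)

lemma wdrop_length {u v : V} (W : G.Walk u v) :
    ∀ n, (wdrop W n).length = W.length - n := by
  induction W with
  | nil => intro n; simp [wdrop]
  | cons h q ih =>
    intro n
    cases n with
    | zero => simp [wdrop]; rfl
    | succ n => simpa [wdrop] using ih n

lemma wdrop_getVert {u v : V} (W : G.Walk u v) :
    ∀ n m, (wdrop W n).getVert m = W.getVert (n + m) := by
  induction W with
  | nil => intro n m; rfl
  | cons h q ih =>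
    intro n m
    cases n with
    | zero => simp [wdrop]; rfl
    | succ n =>
      show (wdrop q n).getVert m = (Walk.cons h q).getVert (n + 1 + m)
      rw [show n + 1 + m = (n + m) + 1 by omega, Walk.getVert_cons_succ, ih n m]

lemma support_get? {u v : V} (W : G.Walk u v) :
    ∀ i, i ≤ W.length → W.support[i]? = some (W.getVert i) := by
  induction W with
  | nil => intro i hi; obtain rfl : i = 0 := Nat.le_zero.mp hi; rfl
  | cons h q ih =>
    intro i hi
    cases i with
    | zero => rfl
    | succ i =>
      simpa [Walk.support_cons, Walk.getVert_cons_succ] using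
        ih i (by simpa [Walk.length_cons] using hi)



section Aux
variable {G : SimpleGraph V}

lemma getVert_mod_self {u : V} (W : G.Walk u u) {m : ℕ} (hm : m ≤ W.length) :
    W.getVert (m % W.length) = W.getVert m := by
  rcases lt_or_eq_of_le hm with h | rfl
  · rw [Nat.mod_eq_of_lt h]
  · rcases Nat.eq_zero_or_pos W.length with h0 | h0
    · simp [h0]
    · rw [Nat.mod_self, Walk.getVert_zero, Walk.getVert_length]

lemma no_short_return {u : V} {W : G.Walk u u} (hW : CircuitLSA4 W) :
    ∀ t, 1 ≤ t → t ≤ 4 → t ≤ W.length → ∀ i,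
      W.getVert (i % W.length) ≠ W.getVert ((i + t) % W.length) := by
  intro t
  induction t using Nat.strong_induction_on with
  | _ t IH =>
    intro ht1 ht4 htn i heq
    set n := W.length with hn
    have hn1 : 1 ≤ n := le_trans ht1 htn
    have hlen : (W.support.dropLast).length = n := by
      simp [Walk.length_support, hn]
    have hget : ∀ m : ℕ, (W.support.dropLast)[m % n]? = some (W.getVert (m % n)) := by
      intro m
      have h1 : m % n < n := Nat.mod_lt _ hn1
      rw [List.dropLast_eq_take, List.getElem?_take_of_lt (by simp [Walk.length_support, h1, ← hn]),
        support_get? _ _ (le_of_lt (lt_of_lt_of_le h1 le_rfl))]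
    refine hW ⟨i, t, ht1, ht4, by rw [hlen]; exact htn, ?_, ?_⟩
    · rw [hlen, hget i, hget (i + t), heq]
    · intro p q hpq hqt
      rw [hlen, hget (i + p), hget (i + q)]
      intro hsome
      have hEq : W.getVert ((i + p) % n) = W.getVert ((i + p + (q - p)) % n) := by
        rw [show i + p + (q - p) = i + q by omega]
        exact Option.some_injective _ hsome
      exact IH (q - p) (by omega) (by omega) (by omega) (by omega) (i + p) hEq

lemma no_short_eq {u : V} {W : G.Walk u u} (hW : CircuitLSA4 W) {p q : ℕ}
    (hpq : p < q) (h4 : q ≤ p + 4) (hq : q ≤ W.length) : W.getVert p ≠ W.getVert q := by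
  have h := no_short_return hW (q - p) (by omega) (by omega) (by omega) p
  rw [show p + (q - p) = q by omega, getVert_mod_self W (by omega), getVert_mod_self W hq] at h
  exact h

lemma cyclic_shift {l : List V} {m i t : ℕ} (h : CyclicShortSubcycleAt (l.rotate m) i t) :
    CyclicShortSubcycleAt l (i + m) t := by
  obtain ⟨h1, h4, hlen, heq, hdist⟩ := h
  rw [List.length_rotate] at hlen
  have hn : 0 < l.length := lt_of_lt_of_le h1 hlen
  have key : ∀ x : ℕ, (l.rotate m)[x % (l.rotate m).length]? = l[(x + m) % l.length]? := by
    intro x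
    rw [List.length_rotate, List.getElem?_rotate (Nat.mod_lt _ hn), Nat.mod_add_mod]
  refine ⟨h1, h4, hlen, ?_, ?_⟩
  · rw [← key i, show i + m + t = i + t + m by omega, ← key (i + t)]
    exact heq
  · intro p q hpq hqt
    rw [show i + m + p = i + p + m by omega, show i + m + q = i + q + m by omega,
      ← key (i + p), ← key (i + q)]
    exact hdist p q hpq hqt


end Aux

lemma dropLast_rotate_one_closed {x : V} {G : SimpleGraph V} (C : G.Walk x x) :
    C.support.dropLast.rotate 1 = C.support.tail := by
  rcases ht : C.support.tail with _ | ⟨a, t⟩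
  · have hsup : C.support = [x] := by rw [C.support_eq_cons, ht]
    rw [hsup]
    simp
  · have hsup : C.support = x :: a :: t := by rw [C.support_eq_cons, ht]
    have h1 : C.support.getLast? = some x := by
      rw [List.getLast?_eq_getLast_of_ne_nil (by simp)]
      simp
    rw [hsup, List.getLast?_cons_cons] at h1
    have hdecomp : (a :: t).dropLast ++ [x] = a :: t :=
      List.dropLast_append_getLast? x (Option.mem_def.mpr h1)
    rw [hsup]
    show ((x :: a :: t).dropLast).rotate 1 = a :: t
    rw [List.dropLast_cons₂, List.rotate_cons_succ, List.rotate_zero, hdecomp]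

lemma CircuitLSA4.rotate [DecidableEq V] {x v : V} {G : SimpleGraph V} {W : G.Walk x x}
    (hW : CircuitLSA4 W) (h : v ∈ W.support) : CircuitLSA4 (W.rotate v h) := by
  have r1 : (W.rotate v h).support.dropLast ~r (W.rotate v h).support.tail :=
    ⟨1, dropLast_rotate_one_closed _⟩
  have r2 : W.support.dropLast ~r W.support.tail := ⟨1, dropLast_rotate_one_closed _⟩
  have h1 : (W.rotate v h).support.dropLast ~r W.support.dropLast :=
    (r1.trans (W.support_rotate v h)).trans r2.symm
  obtain ⟨m, hm⟩ := h1.symm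
  rintro ⟨i, t, hc⟩
  rw [← hm] at hc
  exact hW ⟨i + m, t, cyclic_shift hc⟩

lemma mem_slice_iff {α : Type*} (l : List α) (a b : ℕ) (e : α) :
    e ∈ (l.drop a).take b ↔ ∃ m, a ≤ m ∧ m < a + b ∧ l[m]? = some e := by
  constructor
  · intro he
    obtain ⟨c, hc⟩ := List.mem_iff_getElem?.mp he
    have hcb : c < b := by
      have h1 := (List.getElem?_eq_some_iff.mp hc).1
      have h2 := List.length_take (i := b) (l := l.drop a)
      omega
    rw [List.getElem?_take_of_lt hcb, List.getElem?_drop] at hc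
    exact ⟨a + c, by omega, by omega, hc⟩
  · rintro ⟨m, h1, h2, h3⟩
    refine List.mem_iff_getElem?.mpr ⟨m - a, ?_⟩
    rw [List.getElem?_take_of_lt (by omega), List.getElem?_drop, show a + (m - a) = m by omega]
    exact h3

/-- cutting up a 4-locally self-avoiding Eulerian circuit.  If a graph
`G` with at least one edge admits a 4-locally self-avoiding Eulerian circuit, `v` has
positive degree, and `L = (ℓ₁, …, ℓ_k)` satisfies `ℓᵢ ∈ {1, 2, 3, 4}` and
`ℓ₁ + ⋯ + ℓ_k = |E(G)|`, then `G` has a `P_{(L,v)}`-decomposition, i.e. an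
`L`-path-chain from `v` to `v`. -/
theorem cut_circuit_into_paths {V : Type} [Fintype V] [DecidableEq V]
    (G : SimpleGraph V) [DecidableRel G.Adj]
    (hne : G.edgeSet.Nonempty) (hG : HasLSA4EulerianCircuit G)
    (v : V) (hv : 0 < G.degree v)
    (k : ℕ) (ℓ : Fin k → ℕ)
    (hbound : ∀ i, 1 ≤ ℓ i ∧ ℓ i ≤ 4) (hsum : ∑ i, ℓ i = G.edgeFinset.card) :
    PathChain G v v ℓ := by
  classical
  obtain ⟨u, W0, ⟨htr0, hedge0⟩, hlsa0⟩ := hG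
  obtain ⟨a, hva⟩ := (G.degree_pos_iff_exists_adj v).mp hv
  have hmem : v ∈ W0.support :=
    W0.fst_mem_support_of_mem_edges ((hedge0 s(v, a)).mp (G.mem_edgeSet.mpr hva))
  set W : G.Walk v v := W0.rotate v hmem with hWdef
  have hperm : List.Perm W.edges W0.edges := (W0.rotate_edges v hmem).perm
  have htr : W.edges.Nodup := hperm.nodup_iff.mpr htr0.edges_nodup
  have hedge : ∀ e, e ∈ G.edgeSet ↔ e ∈ W.edges := fun e => (hedge0 e).trans hperm.mem_iff.symm
  have hlsa : CircuitLSA4 W := CircuitLSA4.rotate hlsa0 hmem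
  have hcard : G.edgeFinset.card = W.length := by
    have h1 : G.edgeFinset = W.edges.toFinset := by
      ext e
      simp only [SimpleGraph.mem_edgeFinset, List.mem_toFinset]
      exact hedge e
    rw [h1, List.toFinset_card_of_nodup htr, SimpleGraph.Walk.length_edges]
  -- prefix sums
  set g : ℕ → ℕ := fun m => if h : m < k then ℓ ⟨m, h⟩ else 0 with hgdef
  set ps : ℕ → ℕ := fun j => ∑ i ∈ Finset.range j, g i with hpsdef
  have hgl : ∀ i : Fin k, g i.val = ℓ i := fun i => by simp [hgdef, i.isLt]
  have hstep : ∀ j, ps (j + 1) = ps j + g j := fun j => Finset.sum_range_succ g j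
  have hs0 : ps 0 = 0 := by simp [hpsdef]
  have hsk : ps k = W.length := by
    have h2 : ∑ i ∈ Finset.range k, g i = ∑ i : Fin k, ℓ i := by
      rw [← Fin.sum_univ_eq_sum_range]
      exact Finset.sum_congr rfl fun i _ => hgl i
    simp only [hpsdef]
    rw [h2, hsum, hcard]
  have hmono : ∀ a b, a ≤ b → ps a ≤ ps b := fun a b hab => by
    simp only [hpsdef]
    exact Finset.sum_le_sum_of_subset (Finset.range_subset_range.mpr hab)
  have hsn : ∀ j, j ≤ k → ps j ≤ W.length := fun j hj => hsk ▸ hmono j k hj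
  have hsi1 : ∀ i : Fin k, ps (i.val + 1) = ps i.val + ℓ i := fun i => by rw [hstep, hgl]
  have hkey : ∀ i : Fin k, ps i.val + ℓ i ≤ W.length := fun i => by
    rw [← hsi1]
    exact hsn _ i.isLt
  have hℓ4 : ∀ i : Fin k, ℓ i ≤ 4 := fun i => (hbound i).2
  have hpsle : ∀ i : Fin k, ps i.val ≤ W.length := fun i => by
    have := hkey i; omega
  have hstart : ∀ i : Fin k, W.getVert (ps i.val) = W.getVert (ps (i.castSucc).val) :=
    fun i => by rw [Fin.coe_castSucc]
  have hend : ∀ i : Fin k, (wdrop W (ps i.val)).getVert (ℓ i) = W.getVert (ps (i.succ).val) :=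
    fun i => by rw [wdrop_getVert, Fin.val_succ, hsi1]
  refine ⟨fun j => W.getVert (ps j.val),
    fun i => (wtake (wdrop W (ps i.val)) (ℓ i)).copy (hstart i) (hend i),
    ?_, ?_, ?_, ?_, ?_, ?_⟩
  · simp [hs0]
  · simp only [Fin.val_last]
    rw [hsk]
    exact W.getVert_length
  · -- paths
    intro i
    rw [SimpleGraph.Walk.isPath_def, SimpleGraph.Walk.support_copy, wtake_support,
      wdrop_support W _ (hpsle i), List.nodup_iff_getElem?_ne_getElem?]
    intro c d hcd hdlen
    have hlen1 : ((W.support.drop (ps i.val)).take (ℓ i + 1)).length ≤ ℓ i + 1 := by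
      rw [List.length_take]; omega
    have hd : d ≤ ℓ i := by omega
    have hwb : ps i.val + d ≤ W.length := by have := hkey i; omega
    rw [List.getElem?_take_of_lt (by omega : c < ℓ i + 1), List.getElem?_take_of_lt (by omega : d < ℓ i + 1),
      List.getElem?_drop, List.getElem?_drop,
      support_get? W _ (by omega), support_get? W _ hwb]
    intro hcon
    exact no_short_eq hlsa (by omega : ps i.val + c < ps i.val + d)
      (by have := hℓ4 i; omega) hwb (Option.some.inj hcon)
  · -- lengths
    intro i
    rw [SimpleGraph.Walk.length_copy, wtake_length, wdrop_length]
    have := hkey i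
    omega
  · -- disjointness
    intro i j hij e hei hej
    rw [SimpleGraph.Walk.edges_copy, wtake_edges, wdrop_edges, mem_slice_iff] at hei hej
    obtain ⟨mi, hi1, hi2, hi3⟩ := hei
    obtain ⟨mj, hj1, hj2, hj3⟩ := hej
    have hmi : mi < W.edges.length := (List.getElem?_eq_some_iff.mp hi3).1
    have hmm : mi = mj := (List.getElem?_inj hmi htr).mp (hi3.trans hj3.symm)
    have hvne : i.val ≠ j.val := fun h => hij (Fin.ext h)
    rcases lt_or_gt_of_ne hvne with h | h
    · have hle : ps (i.val + 1) ≤ ps j.val := hmono _ _ (by omega)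
      rw [hsi1] at hle
      omega
    · have hle : ps (j.val + 1) ≤ ps i.val := hmono _ _ (by omega)
      rw [hsi1] at hle
      omega
  · -- coverage
    intro e he
    have heW : e ∈ W.edges := (hedge e).mp he
    obtain ⟨m, hm⟩ := List.mem_iff_getElem?.mp heW
    have hmn : m < W.length := by
      have h1 := (List.getElem?_eq_some_iff.mp hm).1
      rwa [SimpleGraph.Walk.length_edges] at h1
    have hex : ∃ j, m < ps j := ⟨k, hsk ▸ hmn⟩
    have hj0 : m < ps (Nat.find hex) := Nat.find_spec hex
    have hj0k : Nat.find hex ≤ k := Nat.find_min' hex (hsk ▸ hmn)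
    have hj0pos : 0 < Nat.find hex := by
      rcases Nat.eq_zero_or_pos (Nat.find hex) with h | h
      · rw [h, hs0] at hj0; omega
      · exact h
    have hmin : ¬ m < ps (Nat.find hex - 1) := Nat.find_min hex (by omega)
    have hik : Nat.find hex - 1 < k := by omega
    refine ⟨⟨Nat.find hex - 1, hik⟩, ?_⟩
    rw [SimpleGraph.Walk.edges_copy, wtake_edges, wdrop_edges, mem_slice_iff]
    have hval : ((⟨Nat.find hex - 1, hik⟩ : Fin k) : ℕ) = Nat.find hex - 1 := rfl
    have h2 := hsi1 ⟨Nat.find hex - 1, hik⟩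
    rw [hval] at h2
    rw [show Nat.find hex - 1 + 1 = Nat.find hex by omega] at h2
    refine ⟨m, ?_, ?_, hm⟩
    · rw [hval]; omega
    · rw [hval]; omega

end Quartic
end

section
/- For every vertex v of the octahedron and every sequence L = (ℓ_1, …, ℓ_k) with each ℓ_i ∈ {1, 2, 3, 4} and ℓ_1 + ⋯ + ℓ_k = 12, the octahedron has a P_{(L,v)}-decomposition. -/
open SimpleGraph

namespace Quartic

variable {V : Type*}

/-! ### Auxiliary machinery for `octahedron_pathChain` -/

instance decOctAdj : DecidableRel Octahedron.Adj := fun a b =>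
  decidable_of_iff _
    (SimpleGraph.fromRel_adj (fun i j : Fin 6 => (i : ℕ) % 3 ≠ (j : ℕ) % 3) a b).symm

/-- A 12-periodic vertex sequence read off a list. -/
def cyc (l : List (Fin 6)) (n : ℕ) : Fin 6 := l.getD (n % 12) 0

lemma cyc_congr (l : List (Fin 6)) {n m : ℕ} (h : n % 12 = m % 12) :
    cyc l n = cyc l m := by unfold cyc; rw [h]

/-- walk along `c` from position `s`, `t` steps -/
def segWalk (c : ℕ → Fin 6) (h : ∀ n, Octahedron.Adj (c n) (c (n+1))) (s : ℕ) :
    (t : ℕ) → Octahedron.Walk (c s) (c (s + t))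
  | 0 => Walk.nil
  | t+1 => (segWalk c h s t).concat (h (s+t))

lemma segWalk_length (c h s) : ∀ t, (segWalk c h s t).length = t
  | 0 => rfl
  | t+1 => by rw [segWalk, Walk.length_concat, segWalk_length c h s t]

lemma segWalk_edges (c h s) : ∀ t, (segWalk c h s t).edges
    = (List.range t).map (fun n => s(c (s+n), c (s+n+1)))
  | 0 => rfl
  | t+1 => by
      rw [segWalk, Walk.edges_concat, segWalk_edges c h s t, List.range_succ, List.map_append]
      simp only [List.concat_eq_append]
      rfl

lemma segWalk_support (c h s) : ∀ t, (segWalk c h s t).support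
    = (List.range (t+1)).map (fun n => c (s+n))
  | 0 => by simp [segWalk, List.range_succ]
  | t+1 => by
      rw [segWalk, Walk.support_concat, segWalk_support c h s t,
        List.range_succ (n := t+1), List.map_append]
      rfl

lemma segWalk_isPath (c h s t)
    (hdist : ∀ p q, s ≤ p → p < q → q ≤ s + t → c p ≠ c q) :
    (segWalk c h s t).IsPath := by
  apply Walk.IsPath.mk'
  rw [segWalk_support]
  refine List.Nodup.map_on ?_ List.nodup_range
  intro x hx y hy hxy
  rw [List.mem_range] at hx hy
  by_contra hne
  rcases Nat.lt_or_ge x y with hlt | hge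
  · exact hdist (s+x) (s+y) (by omega) (by omega) (by omega) hxy
  · exact hdist (s+y) (s+x) (by omega) (by omega) (by omega) hxy.symm

lemma segWalk_mem_edges (c h s t) (e) :
    e ∈ (segWalk c h s t).edges ↔ ∃ n, n < t ∧ e = s(c (s+n), c (s+n+1)) := by
  rw [segWalk_edges, List.mem_map]
  constructor
  · rintro ⟨n, hn, rfl⟩; exact ⟨n, List.mem_range.1 hn, rfl⟩
  · rintro ⟨n, hn, rfl⟩; exact ⟨n, List.mem_range.2 hn, rfl⟩

/-- Partial sums of the length sequence. -/
def psum {k : ℕ} (ℓ : Fin k → ℕ) (n : ℕ) : ℕ :=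
  ∑ j ∈ Finset.range n, if h : j < k then ℓ ⟨j, h⟩ else 0

lemma psum_zero {k} (ℓ : Fin k → ℕ) : psum ℓ 0 = 0 := rfl

lemma psum_step {k} (ℓ : Fin k → ℕ) (i : Fin k) : psum ℓ (↑i+1) = psum ℓ ↑i + ℓ i := by
  rw [psum, psum, Finset.sum_range_succ, dif_pos i.isLt]

lemma psum_mono {k} (ℓ : Fin k → ℕ) {m n : ℕ} (h : m ≤ n) : psum ℓ m ≤ psum ℓ n :=
  Finset.sum_le_sum_of_subset (Finset.range_subset_range.2 h)

lemma psum_last {k} (ℓ : Fin k → ℕ) : psum ℓ k = ∑ i, ℓ i := by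
  rw [psum, ← Fin.sum_univ_eq_sum_range]
  exact Finset.sum_congr rfl fun i _ => by rw [dif_pos i.isLt]

lemma psum_locate {k} (ℓ : Fin k → ℕ) :
    ∀ j, j ≤ k → ∀ n, n < psum ℓ j → ∃ i : Fin k, psum ℓ ↑i ≤ n ∧ n < psum ℓ (↑i+1) := by
  intro j
  induction j with
  | zero => intro _ n hn; rw [psum_zero] at hn; omega
  | succ j ih =>
      intro hj n hn
      rcases Nat.lt_or_ge n (psum ℓ j) with h | h
      · exact ih (by omega) n h
      · exact ⟨⟨j, by omega⟩, h, hn⟩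

/-- Assemble a path chain from a cut-up Eulerian circuit. -/
lemma assemble (c : ℕ → Fin 6) (Ok : ℕ → ℕ → Prop)
    (h12 : c 12 = c 0)
    (hadj : ∀ n, Octahedron.Adj (c n) (c (n+1)))
    (hedge : ∀ n m : ℕ, n < 12 → m < 12 → n ≠ m →
      s(c n, c (n+1)) ≠ s(c m, c (m+1)))
    (hcov : ∀ a b, Octahedron.Adj a b → ∃ n, n < 12 ∧ s(a,b) = s(c n, c (n+1)))
    (hwin : ∀ s t, 1 ≤ t → t ≤ 4 → s + t ≤ 12 → Ok s t →
      ∀ p q, s ≤ p → p < q → q ≤ s + t → c p ≠ c q)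
    (k : ℕ) (ℓ : Fin k → ℕ) (hbound : ∀ i, 1 ≤ ℓ i ∧ ℓ i ≤ 4) (hsum : ∑ i, ℓ i = 12)
    (hOkL : ∀ i : Fin k, Ok (psum ℓ ↑i) (ℓ i)) :
    PathChain Octahedron (c 0) (c 0) ℓ := by
  have hSk : psum ℓ k = 12 := by rw [psum_last, hsum]
  have hub : ∀ i : Fin k, psum ℓ ↑i + ℓ i ≤ 12 := by
    intro i
    rw [← psum_step, ← hSk]
    exact psum_mono ℓ i.isLt
  refine ⟨fun i => c (psum ℓ ↑i),
    fun i => (segWalk c hadj (psum ℓ ↑i) (ℓ i)).copy rfl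
      (congrArg c (psum_step ℓ i).symm), ?_, ?_, ?_, ?_, ?_, ?_⟩
  · rfl
  · show c (psum ℓ ↑(Fin.last k)) = c 0
    rw [Fin.val_last, hSk, h12]
  · intro i
    rw [Walk.isPath_copy]
    exact segWalk_isPath c hadj _ _
      (hwin _ _ (hbound i).1 (hbound i).2 (hub i) (hOkL i))
  · intro i
    rw [Walk.length_copy, segWalk_length]
  · have key : ∀ i j : Fin k, i < j → ∀ e,
        e ∈ ((segWalk c hadj (psum ℓ ↑i) (ℓ i)).copy rfl
          (congrArg c (psum_step ℓ i).symm)).edges →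
        e ∉ ((segWalk c hadj (psum ℓ ↑j) (ℓ j)).copy rfl
          (congrArg c (psum_step ℓ j).symm)).edges := by
      intro i j hij e hei hej
      rw [Walk.edges_copy, segWalk_mem_edges] at hei hej
      obtain ⟨n, hn, rfl⟩ := hei
      obtain ⟨m, hm, hem⟩ := hej
      have hij' : psum ℓ (↑i + 1) ≤ psum ℓ ↑j := psum_mono ℓ (by exact_mod_cast hij)
      have h1 : psum ℓ ↑i + n < psum ℓ ↑j + m := by
        have := psum_step ℓ i; omega
      have h2 : psum ℓ ↑j + m < 12 := by have := hub j; omega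
      exact hedge _ _ (by omega) (by omega) (by omega) hem
    intro i j hij e hei hej
    rcases lt_or_gt_of_ne hij with h | h
    · exact key i j h e hei hej
    · exact key j i h e hej hei
  · intro e he
    induction e with
    | _ a b =>
      rw [mem_edgeSet] at he
      obtain ⟨n, hn, he⟩ := hcov a b he
      have hn' : n < psum ℓ k := by omega
      obtain ⟨i, h1, h2⟩ := psum_locate ℓ k le_rfl n hn'
      refine ⟨i, ?_⟩
      rw [Walk.edges_copy, segWalk_mem_edges]
      refine ⟨n - psum ℓ ↑i, ?_, ?_⟩
      · have := psum_step ℓ i; omega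
      · have hne : psum ℓ ↑i + (n - psum ℓ ↑i) = n := by omega
        rw [hne, he]

/-! ### The two concrete Eulerian circuits -/

def lA : List (Fin 6) := [0,1,2,4,3,5,0,2,3,1,5,4]
def lB : List (Fin 6) := [0,1,2,3,5,0,2,4,3,1,5,4]

lemma adjA : ∀ (v : Fin 6) (m : Fin 12),
    Octahedron.Adj (cyc lA ↑m + v) (cyc lA (↑m+1) + v) := by decide

lemma adjB : ∀ (v : Fin 6) (m : Fin 12),
    Octahedron.Adj (cyc lB ↑m + v) (cyc lB (↑m+1) + v) := by decide

lemma edgeA : ∀ (n m : Fin 12), n ≠ m →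
    ¬((cyc lA ↑n = cyc lA ↑m ∧ cyc lA (↑n+1) = cyc lA (↑m+1)) ∨
      (cyc lA ↑n = cyc lA (↑m+1) ∧ cyc lA (↑n+1) = cyc lA ↑m)) := by decide

lemma edgeB : ∀ (n m : Fin 12), n ≠ m →
    ¬((cyc lB ↑n = cyc lB ↑m ∧ cyc lB (↑n+1) = cyc lB (↑m+1)) ∨
      (cyc lB ↑n = cyc lB (↑m+1) ∧ cyc lB (↑n+1) = cyc lB ↑m)) := by decide

lemma covA : ∀ (v a b : Fin 6), Octahedron.Adj a b →
    ∃ n : Fin 12, (a = cyc lA ↑n + v ∧ b = cyc lA (↑n+1) + v) ∨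
      (a = cyc lA (↑n+1) + v ∧ b = cyc lA ↑n + v) := by decide

lemma covB : ∀ (v a b : Fin 6), Octahedron.Adj a b →
    ∃ n : Fin 12, (a = cyc lB ↑n + v ∧ b = cyc lB (↑n+1) + v) ∨
      (a = cyc lB (↑n+1) + v ∧ b = cyc lB ↑n + v) := by decide

lemma winA : ∀ p q : Fin 13, p < q → (q:ℕ) ≤ ↑p + 4 →
    ¬((p:ℕ) = 4 ∧ (q:ℕ) = 8) → cyc lA ↑p ≠ cyc lA ↑q := by decide

lemma winB : ∀ p q : Fin 13, p < q → (q:ℕ) ≤ ↑p + 4 →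
    ¬((p:ℕ) = 2 ∧ (q:ℕ) = 6) → ¬((p:ℕ) = 7 ∧ (q:ℕ) = 11) →
    cyc lB ↑p ≠ cyc lB ↑q := by decide

/-- derive the periodic adjacency hypothesis -/
lemma derive_adj (l : List (Fin 6)) (v : Fin 6)
    (h : ∀ m : Fin 12, Octahedron.Adj (cyc l ↑m + v) (cyc l (↑m+1) + v)) (n : ℕ) :
    Octahedron.Adj (cyc l n + v) (cyc l (n+1) + v) := by
  rw [cyc_congr l (show n % 12 = (n % 12) % 12 by omega),
    cyc_congr l (show (n+1) % 12 = (n % 12 + 1) % 12 by omega)]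
  exact h ⟨n % 12, by omega⟩

lemma derive_edge (l : List (Fin 6)) (v : Fin 6)
    (h : ∀ (n m : Fin 12), n ≠ m →
      ¬((cyc l ↑n = cyc l ↑m ∧ cyc l (↑n+1) = cyc l (↑m+1)) ∨
        (cyc l ↑n = cyc l (↑m+1) ∧ cyc l (↑n+1) = cyc l ↑m))) :
    ∀ n m : ℕ, n < 12 → m < 12 → n ≠ m →
      s(cyc l n + v, cyc l (n+1) + v) ≠ s(cyc l m + v, cyc l (m+1) + v) := by
  intro n m hn hm hne heq
  refine h ⟨n, hn⟩ ⟨m, hm⟩ (by simpa using hne) ?_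
  rcases Sym2.eq_iff.1 heq with ⟨h1, h2⟩ | ⟨h1, h2⟩
  · exact Or.inl ⟨add_right_cancel h1, add_right_cancel h2⟩
  · exact Or.inr ⟨add_right_cancel h1, add_right_cancel h2⟩

lemma derive_cov (l : List (Fin 6)) (v : Fin 6)
    (h : ∀ (a b : Fin 6), Octahedron.Adj a b →
      ∃ n : Fin 12, (a = cyc l ↑n + v ∧ b = cyc l (↑n+1) + v) ∨
        (a = cyc l (↑n+1) + v ∧ b = cyc l ↑n + v)) :
    ∀ a b, Octahedron.Adj a b →
      ∃ n, n < 12 ∧ s(a, b) = s(cyc l n + v, cyc l (n+1) + v) := by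
  intro a b hab
  obtain ⟨n, ⟨h1, h2⟩ | ⟨h1, h2⟩⟩ := h a b hab
  · exact ⟨n, n.isLt, by rw [h1, h2]⟩
  · exact ⟨n, n.isLt, by rw [h1, h2, Sym2.eq_swap]⟩

/-- for every vertex `v` of the octahedron and every sequence
`L = (ℓ₁, …, ℓ_k)` with each `ℓᵢ ∈ {1, 2, 3, 4}` and `ℓ₁ + ⋯ + ℓ_k = 12`, the
octahedron has a `P_{(L,v)}`-decomposition, i.e. an `L`-path-chain from `v` to `v`. -/
theorem octahedron_pathChain (v : Fin 6) (k : ℕ) (ℓ : Fin k → ℕ)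
    (hbound : ∀ i, 1 ≤ ℓ i ∧ ℓ i ≤ 4) (hsum : ∑ i, ℓ i = 12) :
    PathChain Octahedron v v ℓ := by
  by_cases hc : ∃ i : Fin k, psum ℓ ↑i = 4 ∧ ℓ i = 4
  · -- use circuit B
    have h := assemble (fun n => cyc lB n + v)
      (fun s t => ¬(s = 2 ∧ t = 4) ∧ ¬(s = 7 ∧ t = 4))
      (show cyc lB 12 + v = cyc lB 0 + v by
        rw [cyc_congr lB (show 12 % 12 = 0 % 12 by omega)])
      (derive_adj lB v (adjB v))
      (derive_edge lB v edgeB)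
      (derive_cov lB v (covB v))
      ?_ k ℓ hbound hsum ?_
    · have h' : PathChain Octahedron (cyc lB 0 + v) (cyc lB 0 + v) ℓ := h
      rwa [show cyc lB 0 + v = v from by
        rw [show cyc lB 0 = 0 from rfl, zero_add]] at h'
    · intro s t h1 h4 hst hOk p q hsp hpq hqst heq
      refine winB ⟨p, by omega⟩ ⟨q, by omega⟩ (Fin.mk_lt_mk.mpr hpq)
        (show q ≤ p + 4 by omega) ?_ ?_ (add_right_cancel heq)
      · show ¬(p = 2 ∧ q = 6)
        rintro ⟨hp, hq⟩; exact hOk.1 ⟨by omega, by omega⟩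
      · show ¬(p = 7 ∧ q = 11)
        rintro ⟨hp, hq⟩; exact hOk.2 ⟨by omega, by omega⟩
    · obtain ⟨i, hi, hli⟩ := hc
      intro j
      have hsi := psum_step ℓ i
      have hsj := psum_step ℓ j
      constructor <;> rintro ⟨hj, hlj⟩ <;>
        rcases lt_trichotomy i j with h | h | h
      · have h' : psum ℓ (↑i + 1) ≤ psum ℓ ↑j :=
          psum_mono ℓ (by have : (i:ℕ) < j := h; omega)
        omega
      · subst h; omega
      · have h' : psum ℓ (↑j + 1) ≤ psum ℓ ↑i :=
          psum_mono ℓ (by have : (j:ℕ) < i := h; omega)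
        omega
      · have h' : psum ℓ (↑i + 1) ≤ psum ℓ ↑j :=
          psum_mono ℓ (by have : (i:ℕ) < j := h; omega)
        omega
      · subst h; omega
      · have h' : psum ℓ (↑j + 1) ≤ psum ℓ ↑i :=
          psum_mono ℓ (by have : (j:ℕ) < i := h; omega)
        omega
  · -- use circuit A
    have h := assemble (fun n => cyc lA n + v)
      (fun s t => ¬(s = 4 ∧ t = 4))
      (show cyc lA 12 + v = cyc lA 0 + v by
        rw [cyc_congr lA (show 12 % 12 = 0 % 12 by omega)])
      (derive_adj lA v (adjA v))
      (derive_edge lA v edgeA)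
      (derive_cov lA v (covA v))
      ?_ k ℓ hbound hsum ?_
    · have h' : PathChain Octahedron (cyc lA 0 + v) (cyc lA 0 + v) ℓ := h
      rwa [show cyc lA 0 + v = v from by
        rw [show cyc lA 0 = 0 from rfl, zero_add]] at h'
    · intro s t h1 h4 hst hOk p q hsp hpq hqst heq
      refine winA ⟨p, by omega⟩ ⟨q, by omega⟩ (Fin.mk_lt_mk.mpr hpq)
        (show q ≤ p + 4 by omega) ?_ (add_right_cancel heq)
      show ¬(p = 4 ∧ q = 8)
      rintro ⟨hp, hq⟩; exact hOk ⟨by omega, by omega⟩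
    · exact fun i hi => hc ⟨i, hi⟩

end Quartic
end

section
/- The graph G_7 admits a 4-locally self-avoiding Eulerian trail from x to y. -/
open SimpleGraph

namespace Quartic

variable {V : Type*}

def myWalk : G7.Walk (0 : Fin 7) (1 : Fin 7) :=
  .cons (by simp [G7] : G7.Adj 0 2) (.cons (by simp [G7] : G7.Adj 2 3) (.cons (by simp [G7] : G7.Adj 3 6) (.cons (by simp [G7] : G7.Adj 6 4) (.cons (by simp [G7] : G7.Adj 4 5) (.cons (by simp [G7] : G7.Adj 5 0) (.cons (by simp [G7] : G7.Adj 0 1) (.cons (by simp [G7] : G7.Adj 1 3) (.cons (by simp [G7] : G7.Adj 3 4) (.cons (by simp [G7] : G7.Adj 4 2) (.cons (by simp [G7] : G7.Adj 2 5) (.cons (by simp [G7] : G7.Adj 5 6) (.cons (by simp [G7] : G7.Adj 6 1) (.nil)))))))))))))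

/-- the graph `G₇` admits a 4-locally self-avoiding Eulerian trail from
`x` (= vertex 0) to `y` (= vertex 1). -/
theorem G7_has_LSA4_eulerian_trail :
    ∃ W : G7.Walk (0 : Fin 7) (1 : Fin 7), IsEulerianTrail W ∧ TrailLSA4 W := by
  refine ⟨myWalk, ⟨?_, ?_⟩, ?_⟩
  · rw [Walk.isTrail_def]; decide
  · intro e
    simp only [G7, edgeSet_fromEdgeSet, Set.mem_diff, Set.mem_insert_iff,
      Set.mem_singleton_iff, Set.mem_setOf_eq]
    induction e using Sym2.ind with
    | _ a b => revert a b; decide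
  · rintro ⟨i, t, h1, h2, h3, h4, h5⟩
    have hlen : myWalk.support.length = 14 := by decide
    rw [hlen] at h3
    have key : ∀ i, i < 14 → ∀ t, t < 5 → 1 ≤ t →
        myWalk.support[i]? ≠ myWalk.support[i + t]? := by decide
    exact key i (by omega) t (by omega) h1 h4


end Quartic
end
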